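/- arXiv:math/0302147 — 2 statements merged into one kernel-verified Lean document; each statement's English description precedes it below -/
import Mathlib

section
/- The projective variety C in ℙ⁴ over 𝔽₃ cut out by the three quadrics q₁ = 2x₁x₂ + x₃x₂ + x₃² − x₄², q₂ = x₅x₁ − x₄x₂, q₃ = x₁² + x₁x₂ − x₃² + x₅² has exactly 13 points rational over 𝔽₃. -/
open Projectivization

set_option maxRecDepth 10000

private def Q (v : Fin 5 → ZMod 3) : Prop :=
  2 * v 0 * v 1 + v 2 * v 1 + v 2 ^ 2 - v 3 ^ 2 = 0 ∧
  v 4 * v 0 - v 3 * v 1 = 0 ∧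
  v 0 ^ 2 + v 0 * v 1 - v 2 ^ 2 + v 4 ^ 2 = 0

private instance : DecidablePred Q := fun v => by unfold Q; infer_instance

private def f : Fin 13 → (Fin 5 → ZMod 3) :=
  ![![0,0,1,1,1], ![0,0,1,1,2], ![0,0,1,2,1], ![0,0,1,2,2], ![0,1,0,0,0],
    ![0,1,2,0,1], ![0,1,2,0,2], ![1,0,1,1,0], ![1,0,1,2,0], ![1,0,2,1,0],
    ![1,0,2,2,0], ![1,2,1,1,2], ![1,2,1,2,1]]

private lemma f_ne_zero (i : Fin 13) : f i ≠ 0 := by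
  revert i; decide

private noncomputable def pts (i : Fin 13) :
    Projectivization (ZMod 3) (Fin 5 → ZMod 3) :=
  Projectivization.mk _ (f i) (f_ne_zero i)

private lemma exists_unit_iff (v w : Fin 5 → ZMod 3) :
    (∃ a : (ZMod 3)ˣ, a • w = v) ↔ ∃ a : ZMod 3, a ≠ 0 ∧ a • w = v := by
  constructor
  · rintro ⟨a, rfl⟩; exact ⟨a, a.ne_zero, by simp [Units.smul_def]⟩
  · rintro ⟨a, ha, rfl⟩; exact ⟨Units.mk0 a ha, by simp [Units.smul_def]⟩

private lemma Q_smul : ∀ a : ZMod 3, a ≠ 0 → ∀ v, (Q (a • v) ↔ Q v) := by decide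

private lemma Q_rep (v : Fin 5 → ZMod 3) (hv : v ≠ 0) :
    Q (Projectivization.mk (ZMod 3) v hv).rep ↔ Q v := by
  have h := Projectivization.mk_rep (Projectivization.mk (ZMod 3) v hv)
  rw [Projectivization.mk_eq_mk_iff] at h
  obtain ⟨a, ha0, haeq⟩ := (exists_unit_iff _ _).mp h
  rw [← haeq]
  exact Q_smul a ha0 v

private lemma Q_cover : ∀ v : Fin 5 → ZMod 3, v ≠ 0 → Q v →
    ∃ i, ∃ a : ZMod 3, a ≠ 0 ∧ a • v = f i := by decide

private lemma f_Q : ∀ i, Q (f i) := by decide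

private lemma pts_inj : Function.Injective pts := by
  intro i j h
  rw [pts, pts, Projectivization.mk_eq_mk_iff, exists_unit_iff] at h
  revert h; revert i j; decide

/-- The intersection of the three quadrics `q₁, q₂, q₃` in `ℙ⁴` over `𝔽₃`
has exactly 13 rational points. -/
theorem curve_has_13_points :
    Set.ncard {p : Projectivization (ZMod 3) (Fin 5 → ZMod 3) |
      2 * p.rep 0 * p.rep 1 + p.rep 2 * p.rep 1 + p.rep 2 ^ 2 - p.rep 3 ^ 2 = 0 ∧
      p.rep 4 * p.rep 0 - p.rep 3 * p.rep 1 = 0 ∧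
      p.rep 0 ^ 2 + p.rep 0 * p.rep 1 - p.rep 2 ^ 2 + p.rep 4 ^ 2 = 0} = 13 := by
  have hset : {p : Projectivization (ZMod 3) (Fin 5 → ZMod 3) |
      2 * p.rep 0 * p.rep 1 + p.rep 2 * p.rep 1 + p.rep 2 ^ 2 - p.rep 3 ^ 2 = 0 ∧
      p.rep 4 * p.rep 0 - p.rep 3 * p.rep 1 = 0 ∧
      p.rep 0 ^ 2 + p.rep 0 * p.rep 1 - p.rep 2 ^ 2 + p.rep 4 ^ 2 = 0} = Set.range pts := by
    ext p
    constructor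
    · intro hp
      have hQ : Q p.rep := hp
      obtain ⟨i, a, ha0, hav⟩ := Q_cover p.rep p.rep_nonzero hQ
      refine ⟨i, ?_⟩
      rw [pts, ← Projectivization.mk_rep p, Projectivization.mk_eq_mk_iff,
        exists_unit_iff]
      exact ⟨a, ha0, hav⟩
    · rintro ⟨i, rfl⟩
      show Q (pts i).rep
      rw [pts, Q_rep]
      exact f_Q i
  rw [hset, ← Nat.card_coe_set_eq, Nat.card_range_of_injective pts_inj,
    Nat.card_eq_fintype_card, Fintype.card_fin]
end

section
/- Over 𝔽₃^24 (equivalently, for the 24th powers of the roots), the roots of P(T) = (T²+2T+3)(T²+3T+3)(T²+3)(T²+2T+3)² satisfy: the roots of T²+3 and T²+3T+3 have 24th power equal to 3¹², while the 24th powers α of the roots of T²+2T+3 satisfy α² + 629918·α + 3²⁴ = 0. Consequently ∏(T − zᵢ²⁴) = (T − 3¹²)⁴(T² + 629918T + 3²⁴)³. -/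
open Polynomial

private lemma pow24_a {z : ℂ} (hz : z^2 + 2*z + 3 = 0) :
    z^24 = 302680*z - 12279 := by
  linear_combination (1*z^22 + (-2)*z^21 + 1*z^20 + 4*z^19 + (-11)*z^18 + 10*z^17 + 13*z^16 + (-56)*z^15 + 73*z^14 + 22*z^13 + (-263)*z^12 + 460*z^11 + (-131)*z^10 + (-1118)*z^9 + 2629*z^8 + (-1904)*z^7 + (-4079)*z^6 + 13870*z^5 + (-15503)*z^4 + (-10604)*z^3 + 67717*z^2 + (-103622)*z^1 + 4093) * hz

private lemma pow24_b {z : ℂ} (hz : z^2 + 3*z + 3 = 0) :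
    z^24 = 3^12 := by
  linear_combination (1*z^22 + (-3)*z^21 + 6*z^20 + (-9)*z^19 + 9*z^18 + (-27)*z^16 + 81*z^15 + (-162)*z^14 + 243*z^13 + (-243)*z^12 + 729*z^10 + (-2187)*z^9 + 4374*z^8 + (-6561)*z^7 + 6561*z^6 + (-19683)*z^4 + 59049*z^3 + (-118098)*z^2 + 177147*z^1 + (-177147)) * hz

private lemma pow24_c {z : ℂ} (hz : z^2 + 3 = 0) :
    z^24 = 3^12 := by
  linear_combination (1*z^22 + (-3)*z^20 + 9*z^18 + (-27)*z^16 + 81*z^14 + (-243)*z^12 + 729*z^10 + (-2187)*z^8 + 6561*z^6 + (-19683)*z^4 + 59049*z^2 + (-177147)) * hz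

private lemma quad_fact {b c z w : ℂ} (hs : z + w = b) (hm : z * w = c) :
    (X - C z) * (X - C w) = X^2 - C b * X + C c := by
  have h : (X - C z) * (X - C w) = X^2 - (C z + C w) * X + C z * C w := by ring
  rw [h, ← C_add, ← C_mul, hs, hm]

/-- For `P = (T²+2T+3)(T²+3T+3)(T²+3)(T²+2T+3)²` with complex roots `z₁, …, z₁₀`
(with multiplicity), `∏ᵢ (T − zᵢ²⁴) = (T − 3¹²)⁴ (T² + 629918 T + 3²⁴)³`. -/
theorem roots_pow24_product :
    ((((X^2 + 2*X + 3) * (X^2 + 3*X + 3) * (X^2 + 3) * (X^2 + 2*X + 3)^2 : ℂ[X])).roots.map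
      (fun z => X - C (z^24))).prod
    = (X - C (3^12 : ℂ))^4 * (X^2 + C (629918 : ℂ) * X + C ((3:ℂ)^24))^3 := by
  have hs2 : ((Real.sqrt 2 : ℝ) : ℂ)^2 = 2 := by
    norm_cast; exact Real.sq_sqrt (by norm_num)
  have hs3 : ((Real.sqrt 3 : ℝ) : ℂ)^2 = 3 := by
    norm_cast; exact Real.sq_sqrt (by norm_num)
  set z1 : ℂ := -1 + Real.sqrt 2 * Complex.I with hz1def
  set z2 : ℂ := (-3 + Real.sqrt 3 * Complex.I)/2 with hz2def
  set z3 : ℂ := Real.sqrt 3 * Complex.I with hz3def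
  have hz1 : z1^2 + 2*z1 + 3 = 0 := by
    rw [hz1def]; linear_combination Complex.I^2 * hs2 + 2 * Complex.I_sq
  have hz2 : z2^2 + 3*z2 + 3 = 0 := by
    rw [hz2def, hz3def]; linear_combination (Complex.I^2/4) * hs3 + (3/4) * Complex.I_sq
  have hz3 : z3^2 + 3 = 0 := by
    rw [hz3def]; linear_combination Complex.I^2 * hs3 + 3 * Complex.I_sq
  set w1 : ℂ := -2 - z1 with hw1def
  set w2 : ℂ := -3 - z2 with hw2def
  set w3 : ℂ := -z3 with hw3def
  have hw1 : w1^2 + 2*w1 + 3 = 0 := by rw [hw1def]; linear_combination hz1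
  have hw2 : w2^2 + 3*w2 + 3 = 0 := by rw [hw2def]; linear_combination hz2
  have hw3 : w3^2 + 3 = 0 := by rw [hw3def]; linear_combination hz3
  -- factor the quadratics
  have f1 : (X^2 + 2*X + 3 : ℂ[X]) = (X - C z1) * (X - C w1) := by
    rw [quad_fact (b := -2) (c := 3) (show z1 + w1 = -2 by rw [hw1def]; ring)
      (show z1 * w1 = 3 by rw [hw1def]; linear_combination -hz1)]
    simp only [map_neg, map_ofNat]
    ring
  have f2 : (X^2 + 3*X + 3 : ℂ[X]) = (X - C z2) * (X - C w2) := by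
    rw [quad_fact (b := -3) (c := 3) (show z2 + w2 = -3 by rw [hw2def]; ring)
      (show z2 * w2 = 3 by rw [hw2def]; linear_combination -hz2)]
    simp only [map_neg, map_ofNat]
    ring
  have f3 : (X^2 + 3 : ℂ[X]) = (X - C z3) * (X - C w3) := by
    rw [quad_fact (b := 0) (c := 3) (show z3 + w3 = 0 by rw [hw3def]; ring)
      (show z3 * w3 = 3 by rw [hw3def]; linear_combination -hz3)]
    simp only [map_zero, map_ofNat]
    ring
  have hP : ((X^2 + 2*X + 3) * (X^2 + 3*X + 3) * (X^2 + 3) * (X^2 + 2*X + 3)^2 : ℂ[X])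
      = (Multiset.map (fun a => X - C a)
          ({z1, w1, z2, w2, z3, w3, z1, w1, z1, w1} : Multiset ℂ)).prod := by
    simp only [Multiset.insert_eq_cons, Multiset.map_cons, Multiset.map_singleton,
      Multiset.prod_cons, Multiset.prod_singleton]
    rw [f1, f2, f3]; ring
  rw [hP, roots_multiset_prod_X_sub_C]
  simp only [Multiset.insert_eq_cons, Multiset.map_cons, Multiset.map_singleton,
    Multiset.prod_cons, Multiset.prod_singleton]
  rw [pow24_b hz2, pow24_b hw2, pow24_c hz3, pow24_c hw3]
  have key : (X - C (z1^24)) * (X - C (w1^24))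
      = X^2 + C (629918 : ℂ) * X + C ((3:ℂ)^24) := by
    rw [quad_fact (b := -629918) (c := (3:ℂ)^24)
      (show z1^24 + w1^24 = -629918 by
        rw [pow24_a hz1, pow24_a hw1, hw1def]; ring)
      (show z1^24 * w1^24 = (3:ℂ)^24 by
        rw [pow24_a hz1, pow24_a hw1, hw1def]
        linear_combination (-302680^2 : ℂ) * hz1)]
    rw [map_neg]; ring
  calc (X - C (z1^24)) * ((X - C (w1^24)) * ((X - C ((3:ℂ)^12)) * ((X - C ((3:ℂ)^12)) *
        ((X - C ((3:ℂ)^12)) * ((X - C ((3:ℂ)^12)) * ((X - C (z1^24)) * ((X - C (w1^24)) *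
        ((X - C (z1^24)) * (X - C (w1^24))))))))))
      = (X - C ((3:ℂ)^12))^4 * ((X - C (z1^24)) * (X - C (w1^24)))^3 := by ring
    _ = _ := by rw [key]
end
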